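/- Let 2 ≤ r < s be integers with 2r > s and s odd. Then there is no (r,s;4)-balanced biregular graph of order 2s, and the minimum order n_bb(r,s;4) equals 2(s+1). -/

import Mathlib

open SimpleGraph Set

/-- The degree of a vertex, via the natural cardinality of its neighbor set. -/
noncomputable def deg {V : Type*} (G : SimpleGraph V) (v : V) : ℕ :=
  (G.neighborSet v).ncard

/-- Number of edges both of whose endpoints have degree `d`. -/
noncomputable def edgeCountDeg {V : Type*} (G : SimpleGraph V) (d : ℕ) : ℕ :=
  {e ∈ G.edgeSet | ∀ v ∈ e, deg G v = d}.ncard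

/-- An `(r,s;g)`-balanced biregular graph: girth `g`, degree set exactly `{r, s}`,
and equally many vertices of degree `r` as of degree `s`. -/
def IsBabi {V : Type*} (r s g : ℕ) (G : SimpleGraph V) : Prop :=
  G.girth = g ∧ (∀ v, deg G v = r ∨ deg G v = s) ∧
  (∃ v, deg G v = r) ∧ (∃ v, deg G v = s) ∧
  {v | deg G v = r}.ncard = {v | deg G v = s}.ncard


set_option linter.unusedSectionVars false

section aux
section general
variable {V : Type*} [Fintype V] [DecidableEq V] {G : SimpleGraph V} [DecidableRel G.Adj]

lemma deg_eq_degree (v : V) : deg G v = G.degree v := by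
  rw [deg, Set.ncard_eq_toFinset_card', degree, neighborFinset]

lemma ncard_setOf (p : V → Prop) [DecidablePred p] :
    {v | p v}.ncard = (Finset.univ.filter p).card := by
  rw [Set.ncard_eq_toFinset_card', Set.toFinset_setOf]

lemma no_triangle (h4 : G.girth = 4) {x y z : V} (hxy : G.Adj x y) (hyz : G.Adj y z)
    (hxz : G.Adj x z) : False := by
  have hac : ¬ G.IsAcyclic := by
    intro h
    rw [girth_eq_zero.mpr h] at h4
    omega
  have heg : G.egirth = 4 := by
    have h1 : ((G.egirth.toNat : ℕ) : ℕ∞) = G.egirth :=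
      ENat.coe_toNat (egirth_eq_top.not.mpr hac)
    rw [← h1]; rw [girth] at h4; rw [h4]; rfl
  have hle : ∀ a (w : G.Walk a a), w.IsCycle → (4:ℕ∞) ≤ w.length :=
    le_egirth.mp (le_of_eq heg.symm)
  have hyx : y ≠ x := (G.ne_of_adj hxy).symm
  have hzx : z ≠ x := (G.ne_of_adj hxz).symm
  have hyz' : y ≠ z := G.ne_of_adj hyz
  let w : G.Walk x x := Walk.cons hxy (Walk.cons hyz (Walk.cons hxz.symm Walk.nil))
  have hcyc : w.IsCycle := by
    rw [Walk.cons_isCycle_iff]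
    constructor
    · rw [Walk.cons_isPath_iff]
      refine ⟨?_, by simp [hyz', hyx]⟩
      rw [Walk.cons_isPath_iff]
      exact ⟨Walk.IsPath.nil, by simp [hzx]⟩
    · simp only [Walk.edges_cons, Walk.edges_nil, List.mem_cons, List.not_mem_nil, or_false]
      rintro (h | h) <;> rw [Sym2.eq_iff] at h <;>
        rcases h with ⟨h1, h2⟩ | ⟨h1, h2⟩ <;> simp_all
  have := hle x w hcyc
  have hl : w.length = 3 := rfl
  rw [hl] at this
  exact absurd this (by decide)

end general

set_option linter.unusedSectionVars false

section counting
variable {V : Type*} [Fintype V] [DecidableEq V] {G : SimpleGraph V} [DecidableRel G.Adj]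
variable {r s : ℕ}

lemma babi_card (hrs : r < s) (h : IsBabi r s 4 G) :
    Fintype.card V = 2 * (Finset.univ.filter (fun v => deg G v = s)).card := by
  obtain ⟨_, hdeg, _, _, hbal⟩ := h
  rw [ncard_setOf, ncard_setOf] at hbal
  have hsplit := Finset.card_filter_add_card_filter_not
    (s := (Finset.univ : Finset V)) (p := fun v => deg G v = s)
  have heq : Finset.univ.filter (fun v => ¬ deg G v = s) =
      Finset.univ.filter (fun v => deg G v = r) := by
    apply Finset.filter_congr
    intro v _
    rcases hdeg v with hv | hv <;> simp [hv] <;> omega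
  rw [heq, hbal] at hsplit
  simpa [Finset.card_univ, two_mul] using hsplit.symm

lemma babi_SS_edge (hrs : r < s) (h : IsBabi r s 4 G) :
    ∃ u v, G.Adj u v ∧ deg G u = s ∧ deg G v = s := by
  by_contra hno
  push_neg at hno
  obtain ⟨_, hdeg, _, ⟨v0, hv0⟩, hbal⟩ := h
  set Sf := Finset.univ.filter (fun v => deg G v = s) with hSf
  set Rf := Finset.univ.filter (fun v => deg G v = r) with hRf
  have hmemS : ∀ v, v ∈ Sf ↔ deg G v = s := by intro v; simp [hSf]
  have hmemR : ∀ v, v ∈ Rf ↔ deg G v = r := by intro v; simp [hRf]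
  -- neighbors of S-vertices are all in R
  have hnbr : ∀ v ∈ Sf, Rf.filter (fun u => G.Adj v u) = G.neighborFinset v := by
    intro v hv
    ext u
    simp only [Finset.mem_filter, mem_neighborFinset, hmemR]
    constructor
    · tauto
    · intro hadj
      refine ⟨?_, hadj⟩
      rcases hdeg u with hu | hu
      · exact hu
      · exact absurd hadj (by
          intro hadj'
          exact hno v u hadj' ((hmemS v).mp hv) hu)
  have key : ∑ v ∈ Sf, (Rf.filter (fun u => G.Adj v u)).card
      = ∑ u ∈ Rf, (Sf.filter (fun v => G.Adj u v)).card := by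
    simp only [Finset.card_filter]
    rw [Finset.sum_comm]
    refine Finset.sum_congr rfl fun u _ => Finset.sum_congr rfl fun v _ => ?_
    simp only [G.adj_comm]
  have hlhs : ∑ v ∈ Sf, (Rf.filter (fun u => G.Adj v u)).card = Sf.card * s := by
    rw [Finset.sum_congr rfl (fun v hv => ?_), Finset.sum_const, smul_eq_mul]
    rw [hnbr v hv, card_neighborFinset_eq_degree, ← deg_eq_degree, (hmemS v).mp hv]
  have hrhs : ∑ u ∈ Rf, (Sf.filter (fun v => G.Adj u v)).card ≤ Rf.card * r := by
    rw [← smul_eq_mul, ← Finset.sum_const]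
    refine Finset.sum_le_sum fun u hu => ?_
    calc (Sf.filter (fun v => G.Adj u v)).card ≤ (G.neighborFinset u).card := by
          apply Finset.card_le_card
          intro v hv
          simp only [Finset.mem_filter] at hv
          simpa using hv.2
      _ = r := by rw [card_neighborFinset_eq_degree, ← deg_eq_degree, (hmemR u).mp hu]
  have hRS : Rf.card = Sf.card := by
    rw [ncard_setOf, ncard_setOf] at hbal
    exact hbal
  have hpos : 0 < Sf.card := Finset.card_pos.mpr ⟨v0, (hmemS v0).mpr hv0⟩
  have : Sf.card * s ≤ Sf.card * r := by
    calc Sf.card * s = _ := hlhs.symm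
      _ = _ := key
      _ ≤ Rf.card * r := hrhs
      _ = Sf.card * r := by rw [hRS]
  have := Nat.le_of_mul_le_mul_left this hpos
  omega

end counting

section main
variable {V : Type*} [Fintype V] [DecidableEq V] {G : SimpleGraph V} [DecidableRel G.Adj]
variable {r s : ℕ}

lemma babi_disj_nbrs (hrs : r < s) (h : IsBabi r s 4 G) :
    ∃ u v, G.Adj u v ∧ (G.neighborFinset u).card = s ∧ (G.neighborFinset v).card = s ∧
      Disjoint (G.neighborFinset u) (G.neighborFinset v) := by
  obtain ⟨u, v, huv, hu, hv⟩ := babi_SS_edge hrs h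
  refine ⟨u, v, huv, ?_, ?_, ?_⟩
  · rw [card_neighborFinset_eq_degree, ← deg_eq_degree, hu]
  · rw [card_neighborFinset_eq_degree, ← deg_eq_degree, hv]
  · rw [Finset.disjoint_left]
    intro w hwu hwv
    rw [mem_neighborFinset] at hwu hwv
    exact no_triangle h.1 huv hwv hwu

lemma babi_lb (hrs : r < s) (h : IsBabi r s 4 G) : 2 * s ≤ Fintype.card V := by
  obtain ⟨u, v, _, hu, hv, hdisj⟩ := babi_disj_nbrs hrs h
  have := Finset.card_le_card (Finset.subset_univ
    (G.neighborFinset u ∪ G.neighborFinset v))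
  rw [Finset.card_union_of_disjoint hdisj, hu, hv, Finset.card_univ] at this
  omega

lemma babi_no2s (hr : 2 ≤ r) (hrs : r < s) (hso : Odd s)
    (hcard : Fintype.card V = 2 * s) (h : IsBabi r s 4 G) : False := by
  obtain ⟨u, v, huv, hu, hv, hdisj⟩ := babi_disj_nbrs hrs h
  set A := G.neighborFinset u with hA
  set B := G.neighborFinset v with hB
  have huniv : A ∪ B = Finset.univ := by
    apply Finset.eq_univ_of_card
    rw [Finset.card_union_of_disjoint hdisj, hu, hv, hcard]
    omega
  have hdeg := h.2.1
  -- neighbors of A-vertices lie in B and vice versa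
  have hsubA : ∀ x ∈ A, G.neighborFinset x ⊆ B := by
    intro x hx y hy
    rw [mem_neighborFinset] at hy
    have : y ∈ A ∪ B := huniv ▸ Finset.mem_univ y
    rcases Finset.mem_union.mp this with hyA | hyB
    · rw [hA, mem_neighborFinset] at hx hyA
      exact absurd hy (fun hy => no_triangle h.1 hx hy hyA)
    · exact hyB
  have hsubB : ∀ x ∈ B, G.neighborFinset x ⊆ A := by
    intro x hx y hy
    rw [mem_neighborFinset] at hy
    have : y ∈ A ∪ B := huniv ▸ Finset.mem_univ y
    rcases Finset.mem_union.mp this with hyA | hyB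
    · exact hyA
    · rw [hB, mem_neighborFinset] at hx hyB
      exact absurd hy (fun hy => no_triangle h.1 hx hy hyB)
  have hfA : ∀ x ∈ A, (B.filter (fun y => G.Adj x y)).card = deg G x := by
    intro x hx
    rw [deg_eq_degree, ← card_neighborFinset_eq_degree]
    congr 1
    ext y
    simp only [Finset.mem_filter, mem_neighborFinset]
    exact ⟨fun h => h.2, fun h => ⟨hsubA x hx (by rwa [mem_neighborFinset]), h⟩⟩
  have hfB : ∀ y ∈ B, (A.filter (fun x => G.Adj y x)).card = deg G y := by
    intro y hy
    rw [deg_eq_degree, ← card_neighborFinset_eq_degree]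
    congr 1
    ext x
    simp only [Finset.mem_filter, mem_neighborFinset]
    exact ⟨fun h => h.2, fun h => ⟨hsubB y hy (by rwa [mem_neighborFinset]), h⟩⟩
  have keysum : ∑ x ∈ A, deg G x = ∑ y ∈ B, deg G y := by
    calc ∑ x ∈ A, deg G x = ∑ x ∈ A, (B.filter (fun y => G.Adj x y)).card :=
          Finset.sum_congr rfl (fun x hx => (hfA x hx).symm)
      _ = ∑ x ∈ A, ∑ y ∈ B, if G.Adj x y then 1 else 0 := by
          simp only [Finset.card_filter]
      _ = ∑ y ∈ B, ∑ x ∈ A, if G.Adj y x then 1 else 0 := by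
          rw [Finset.sum_comm]; simp only [G.adj_comm]
      _ = ∑ y ∈ B, (A.filter (fun x => G.Adj y x)).card := by
          simp only [Finset.card_filter]
      _ = ∑ y ∈ B, deg G y := Finset.sum_congr rfl (fun y hy => hfB y hy)
  set a := (A.filter (fun x => deg G x = s)).card with ha
  set a' := (A.filter (fun x => ¬ deg G x = s)).card with ha'
  set b := (B.filter (fun x => deg G x = s)).card with hb
  set b' := (B.filter (fun x => ¬ deg G x = s)).card with hb'
  have hAsum : ∑ x ∈ A, deg G x = a * s + a' * r := by
    rw [← Finset.sum_filter_add_sum_filter_not A (fun x => deg G x = s)]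
    congr 1
    · rw [Finset.sum_congr rfl (fun x hx => (Finset.mem_filter.mp hx).2),
        Finset.sum_const, smul_eq_mul]
    · rw [Finset.sum_congr rfl (fun x hx => ?_), Finset.sum_const, smul_eq_mul]
      have := (Finset.mem_filter.mp hx).2
      rcases hdeg x with h' | h' <;> tauto
  have hBsum : ∑ y ∈ B, deg G y = b * s + b' * r := by
    rw [← Finset.sum_filter_add_sum_filter_not B (fun x => deg G x = s)]
    congr 1
    · rw [Finset.sum_congr rfl (fun x hx => (Finset.mem_filter.mp hx).2),
        Finset.sum_const, smul_eq_mul]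
    · rw [Finset.sum_congr rfl (fun x hx => ?_), Finset.sum_const, smul_eq_mul]
      have := (Finset.mem_filter.mp hx).2
      rcases hdeg x with h' | h' <;> tauto
  have hAcard : a + a' = s := by
    rw [ha, ha', Finset.card_filter_add_card_filter_not, hA,
      card_neighborFinset_eq_degree, ← deg_eq_degree]
    rw [hA, card_neighborFinset_eq_degree, ← deg_eq_degree] at hu
    exact hu
  have hBcard : b + b' = s := by
    rw [hb, hb', Finset.card_filter_add_card_filter_not, hB,
      card_neighborFinset_eq_degree, ← deg_eq_degree]
    rw [hB, card_neighborFinset_eq_degree, ← deg_eq_degree] at hv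
    exact hv
  have hab : a = b := by
    have h1 : (a:ℤ) * s + a' * r = b * s + b' * r := by
      rw [hAsum, hBsum] at keysum; exact_mod_cast keysum
    have h2 : (a:ℤ) + a' = s := by exact_mod_cast hAcard
    have h3 : (b:ℤ) + b' = s := by exact_mod_cast hBcard
    have h4 : ((a:ℤ) - b) * ((s:ℤ) - r) = 0 := by linear_combination h1 - r * h2 + r * h3
    have h5 : ((s:ℤ) - r) ≠ 0 := by
      have : (r:ℤ) < s := by exact_mod_cast hrs
      omega
    rcases mul_eq_zero.mp h4 with h6 | h6
    · have : (a:ℤ) = b := by omega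
      exact_mod_cast this
    · exact absurd h6 h5
  -- count degree-s vertices
  have hScard : (Finset.univ.filter (fun v => deg G v = s)).card = s := by
    have := babi_card hrs h
    omega
  have hSsplit : (Finset.univ.filter (fun v => deg G v = s)).card = a + b := by
    rw [← huniv, Finset.filter_union,
      Finset.card_union_of_disjoint (Finset.disjoint_filter_filter hdisj)]
  rw [hScard] at hSsplit
  rw [hab] at hSsplit
  rcases hso with ⟨k, hk⟩
  omega

end main

lemma mod_shift_eq (m : ℕ) (hm : 0 < m) (x c : ℕ) :
    ((x + c) % m + (m - c % m)) % m = x % m := by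
  rw [Nat.mod_add_mod]
  have h1 : x + c + (m - c % m) = (x + m * (c / m) + m) - c % m + c % m - c % m + c % m := by
    have := Nat.div_add_mod c m
    have := Nat.mod_lt c hm
    omega
  have h2 : x + c + (m - c % m) = x + m * (c / m) + m := by
    have := Nat.div_add_mod c m
    have := Nat.mod_lt c hm
    omega
  rw [h2, Nat.add_mod_right, Nat.add_mul_mod_self_left]

lemma mod_shift_eq' (m : ℕ) (hm : 0 < m) (x c : ℕ) :
    (x + c + (m - c % m)) % m = x % m := by
  rw [← Nat.mod_add_mod, mod_shift_eq m hm x c]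

lemma count_mod (m t c : ℕ) (hm : 0 < m) (ht : t ≤ m) :
    ((Finset.range m).filter (fun k => (k + c) % m < t)).card = t := by
  have key : ((Finset.range m).filter (fun k => (k + c) % m < t)).card
      = ((Finset.range m).filter (fun k => k < t)).card := by
    apply Finset.card_nbij' (fun k => (k + c) % m) (fun k => (k + (m - c % m)) % m)
    · intro a ha
      simp only [Finset.mem_coe, Finset.mem_filter, Finset.mem_range] at *
      exact ⟨Nat.mod_lt _ hm, ha.2⟩
    · intro a ha
      simp only [Finset.mem_coe, Finset.mem_filter, Finset.mem_range] at *
      refine ⟨Nat.mod_lt _ hm, ?_⟩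
      rw [Nat.mod_add_mod, add_right_comm, mod_shift_eq' m hm a c,
        Nat.mod_eq_of_lt ha.1]
      exact ha.2
    · intro a ha
      simp only [Finset.mem_coe, Finset.mem_filter, Finset.mem_range] at ha
      beta_reduce; rw [mod_shift_eq m hm a c, Nat.mod_eq_of_lt ha.1]
    · intro a ha
      simp only [Finset.mem_coe, Finset.mem_filter, Finset.mem_range] at ha
      beta_reduce; rw [Nat.mod_add_mod, add_right_comm, mod_shift_eq' m hm a c,
        Nat.mod_eq_of_lt ha.1]
  rw [key]
  have : (Finset.range m).filter (fun k => k < t) = Finset.range t := by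
    ext k; simp only [Finset.mem_filter, Finset.mem_range]; omega
  rw [this, Finset.card_range]

def Hrel (m t i j : ℕ) : Prop :=
  (i < m ∧ j = i) ∨ (m ≤ i ∧ m ≤ j ∧ (j + m - i) % m < t)

instance (m t i j : ℕ) : Decidable (Hrel m t i j) := by
  unfold Hrel; infer_instance

lemma Hrel_count_left (m t : ℕ) (hm : 0 < m) (ht : t ≤ m) (i : ℕ) (hi : i < 2 * m) :
    ((Finset.range (2 * m)).filter (fun j => Hrel m t i j)).card
      = if i < m then 1 else t := by
  by_cases him : i < m
  · rw [if_pos him]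
    have : (Finset.range (2 * m)).filter (fun j => Hrel m t i j) = {i} := by
      ext j
      simp only [Finset.mem_filter, Finset.mem_range, Finset.mem_singleton]; simp only [Hrel]
      constructor
      · rintro ⟨_, ⟨_, h⟩ | ⟨h, _⟩⟩
        · exact h
        · omega
      · rintro rfl
        exact ⟨by omega, Or.inl ⟨him, rfl⟩⟩
    rw [this, Finset.card_singleton]
  · rw [if_neg him]
    push_neg at him
    have key : ((Finset.range (2 * m)).filter (fun j => Hrel m t i j)).card
        = ((Finset.range m).filter (fun k => (k + (2 * m - i)) % m < t)).card := by
      apply Finset.card_nbij' (fun j => j - m) (fun k => k + m)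
      · intro j hj
        simp only [Finset.mem_coe, Finset.mem_filter, Finset.mem_range] at *; simp only [Hrel] at *
        rcases hj with ⟨hj1, ⟨h1, _⟩ | ⟨_, h2, h3⟩⟩
        · omega
        · refine ⟨by omega, ?_⟩
          have : j - m + (2 * m - i) = j + m - i := by omega
          rw [this]; exact h3
      · intro k hk
        simp only [Finset.mem_coe, Finset.mem_filter, Finset.mem_range] at *; simp only [Hrel] at *
        refine ⟨by omega, Or.inr ⟨him, by omega, ?_⟩⟩
        have : k + m + m - i = k + (2 * m - i) := by omega
        rw [this]; exact hk.2
      · intro j hj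
        simp only [Finset.mem_coe, Finset.mem_filter, Finset.mem_range] at hj; simp only [Hrel] at hj
        beta_reduce; rcases hj with ⟨_, ⟨h1, _⟩ | ⟨_, h2, _⟩⟩ <;> omega
      · intro k hk
        simp only [Finset.mem_coe, Finset.mem_filter, Finset.mem_range] at hk
        beta_reduce; omega
    rw [key, count_mod m t (2 * m - i) hm ht]

lemma Hrel_count_right (m t : ℕ) (hm : 0 < m) (ht : t ≤ m) (j : ℕ) (hj : j < 2 * m) :
    ((Finset.range (2 * m)).filter (fun i => Hrel m t i j)).card
      = if j < m then 1 else t := by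
  by_cases hjm : j < m
  · rw [if_pos hjm]
    have : (Finset.range (2 * m)).filter (fun i => Hrel m t i j) = {j} := by
      ext i
      simp only [Finset.mem_filter, Finset.mem_range, Finset.mem_singleton]; simp only [Hrel]
      constructor
      · rintro ⟨_, ⟨_, h⟩ | ⟨_, h, _⟩⟩ <;> omega
      · rintro rfl
        exact ⟨by omega, Or.inl ⟨hjm, rfl⟩⟩
    rw [this, Finset.card_singleton]
  · rw [if_neg hjm]
    push_neg at hjm
    have key : ((Finset.range (2 * m)).filter (fun i => Hrel m t i j)).card
        = ((Finset.range m).filter (fun k => (k + (j - m + 1)) % m < t)).card := by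
      apply Finset.card_nbij' (fun i => 2 * m - 1 - i) (fun k => 2 * m - 1 - k)
      · intro i hi
        simp only [Finset.mem_coe, Finset.mem_filter, Finset.mem_range] at *; simp only [Hrel] at *
        rcases hi with ⟨hi1, ⟨h1, h2⟩ | ⟨h1, h2, h3⟩⟩
        · omega
        · refine ⟨by omega, ?_⟩
          have : 2 * m - 1 - i + (j - m + 1) = j + m - i := by omega
          rw [this]; exact h3
      · intro k hk
        simp only [Finset.mem_coe, Finset.mem_filter, Finset.mem_range] at *; simp only [Hrel] at *
        refine ⟨by omega, Or.inr ⟨by omega, hjm, ?_⟩⟩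
        have : j + m - (2 * m - 1 - k) = k + (j - m + 1) := by omega
        rw [this]; exact hk.2
      · intro i hi
        simp only [Finset.mem_coe, Finset.mem_filter, Finset.mem_range] at hi; simp only [Hrel] at hi
        beta_reduce; rcases hi with ⟨_, ⟨h1, _⟩ | ⟨h1, _, _⟩⟩ <;> omega
      · intro k hk
        simp only [Finset.mem_coe, Finset.mem_filter, Finset.mem_range] at hk
        beta_reduce; omega
    rw [key, count_mod m t (j - m + 1) hm ht]

def babiGraph (s m t : ℕ) : SimpleGraph (Fin (2 * (s + 1))) where
  Adj x y := (x.val < s + 1 ∧ s + 1 ≤ y.val ∧ ¬ Hrel m t x.val (y.val - (s + 1))) ∨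
             (y.val < s + 1 ∧ s + 1 ≤ x.val ∧ ¬ Hrel m t y.val (x.val - (s + 1)))
  symm := by constructor; intro x y h; tauto
  loopless := by constructor; intro x h; rcases h with ⟨h1, h2, _⟩ | ⟨h1, h2, _⟩ <;> omega

instance (s m t : ℕ) : DecidableRel (babiGraph s m t).Adj := fun x y => by
  unfold babiGraph; simp only; infer_instance

lemma babiGraph_adj (s m t : ℕ) (x y : Fin (2 * (s + 1))) :
    (babiGraph s m t).Adj x y ↔
      (x.val < s + 1 ∧ s + 1 ≤ y.val ∧ ¬ Hrel m t x.val (y.val - (s + 1))) ∨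
      (y.val < s + 1 ∧ s + 1 ≤ x.val ∧ ¬ Hrel m t y.val (x.val - (s + 1))) := Iff.rfl

lemma deg_eq_filter {n : ℕ} (G : SimpleGraph (Fin n)) [DecidableRel G.Adj]
    (x : Fin n) : deg G x = (Finset.univ.filter (fun y => G.Adj x y)).card := by
  rw [deg, Set.ncard_eq_toFinset_card']
  congr 1
  ext y
  simp [mem_neighborSet]

lemma babiGraph_deg (s m t : ℕ) (hm : 0 < m) (h2m : s + 1 = 2 * m) (htm : t ≤ m)
    (x : Fin (2 * (s + 1))) :
    deg (babiGraph s m t) x =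
      if (x.val < m ∨ (s + 1 ≤ x.val ∧ x.val < s + 1 + m)) then s else s + 1 - t := by
  rw [deg_eq_filter]
  by_cases hx : x.val < s + 1
  · -- A side
    have hadj : ∀ y : Fin (2 * (s + 1)), (babiGraph s m t).Adj x y ↔
        (s + 1 ≤ y.val ∧ ¬ Hrel m t x.val (y.val - (s + 1))) := by
      intro y
      rw [babiGraph_adj]
      constructor
      · rintro (⟨_, h2, h3⟩ | ⟨_, h2, _⟩)
        · exact ⟨h2, h3⟩
        · omega
      · intro h; exact Or.inl ⟨hx, h.1, h.2⟩
    have hcardeq : (Finset.univ.filter (fun y => (babiGraph s m t).Adj x y)).card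
        = ((Finset.range (2 * m)).filter (fun j => ¬ Hrel m t x.val j)).card := by
      apply Finset.card_nbij' (fun y => y.val - (s + 1))
        (fun j => (⟨(j + (s + 1)) % (2 * (s + 1)), Nat.mod_lt _ (by omega)⟩ : Fin (2 * (s + 1))))
      · intro y hy
        simp only [Finset.mem_coe, Finset.mem_filter, Finset.mem_univ, true_and, hadj y,
          Finset.mem_range] at *
        refine ⟨by omega, hy.2⟩
      · intro j hj
        simp only [Finset.mem_coe, Finset.mem_filter, Finset.mem_range] at hj
        have hlt : j + (s + 1) < 2 * (s + 1) := by omega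
        simp only [Finset.mem_coe, Finset.mem_filter, Finset.mem_univ, true_and, hadj]
        rw [Nat.mod_eq_of_lt hlt]
        constructor
        · omega
        · have : j + (s + 1) - (s + 1) = j := by omega
          rw [this]; exact hj.2
      · intro y hy
        simp only [Finset.mem_coe, Finset.mem_filter, Finset.mem_univ, true_and, hadj y] at hy
        have : y.val - (s + 1) + (s + 1) = y.val := by omega
        apply Fin.ext
        simp only [this]
        exact Nat.mod_eq_of_lt y.isLt
      · intro j hj
        simp only [Finset.mem_coe, Finset.mem_filter, Finset.mem_range] at hj
        have hlt : j + (s + 1) < 2 * (s + 1) := by omega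
        simp only [Nat.mod_eq_of_lt hlt]
        omega
    rw [hcardeq]
    have hsplit := Finset.card_filter_add_card_filter_not
      (s := Finset.range (2 * m)) (p := fun j => Hrel m t x.val j)
    rw [Finset.card_range, Hrel_count_left m t hm htm x.val (by omega)] at hsplit
    have hP : (x.val < m ∨ (s + 1 ≤ x.val ∧ x.val < s + 1 + m)) ↔ x.val < m := by omega
    by_cases hxm : x.val < m
    · rw [if_pos (hP.mpr hxm)]
      rw [if_pos hxm] at hsplit
      omega
    · rw [if_neg (fun h => hxm (hP.mp h))]
      rw [if_neg hxm] at hsplit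
      omega
  · -- B side
    push_neg at hx
    have hadj : ∀ y : Fin (2 * (s + 1)), (babiGraph s m t).Adj x y ↔
        (y.val < s + 1 ∧ ¬ Hrel m t y.val (x.val - (s + 1))) := by
      intro y
      rw [babiGraph_adj]
      constructor
      · rintro (⟨h1, _, _⟩ | ⟨h1, _, h3⟩)
        · omega
        · exact ⟨h1, h3⟩
      · intro h; exact Or.inr ⟨h.1, hx, h.2⟩
    have hcardeq : (Finset.univ.filter (fun y => (babiGraph s m t).Adj x y)).card
        = ((Finset.range (2 * m)).filter (fun i => ¬ Hrel m t i (x.val - (s + 1)))).card := by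
      apply Finset.card_nbij' (fun y => y.val)
        (fun i => (⟨i % (2 * (s + 1)), Nat.mod_lt _ (by omega)⟩ : Fin (2 * (s + 1))))
      · intro y hy
        simp only [Finset.mem_coe, Finset.mem_filter, Finset.mem_univ, true_and, hadj y,
          Finset.mem_range] at *
        exact ⟨by omega, hy.2⟩
      · intro i hi
        simp only [Finset.mem_coe, Finset.mem_filter, Finset.mem_range] at hi
        have hlt : i < 2 * (s + 1) := by omega
        simp only [Finset.mem_coe, Finset.mem_filter, Finset.mem_univ, true_and, hadj]
        rw [Nat.mod_eq_of_lt hlt]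
        exact ⟨by omega, hi.2⟩
      · intro y hy
        apply Fin.ext
        simp only
        exact Nat.mod_eq_of_lt y.isLt
      · intro i hi
        simp only [Finset.mem_coe, Finset.mem_filter, Finset.mem_range] at hi
        have hlt : i < 2 * (s + 1) := by omega
        simp only [Nat.mod_eq_of_lt hlt]
    rw [hcardeq]
    have hsplit := Finset.card_filter_add_card_filter_not
      (s := Finset.range (2 * m)) (p := fun i => Hrel m t i (x.val - (s + 1)))
    rw [Finset.card_range, Hrel_count_right m t hm htm (x.val - (s + 1)) (by omega)] at hsplit
    have hP : (x.val < m ∨ (s + 1 ≤ x.val ∧ x.val < s + 1 + m)) ↔ x.val - (s + 1) < m := by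
      omega
    by_cases hxm : x.val - (s + 1) < m
    · rw [if_pos (hP.mpr hxm)]
      rw [if_pos hxm] at hsplit
      omega
    · rw [if_neg (fun h => hxm (hP.mp h))]
      rw [if_neg hxm] at hsplit
      omega

lemma babiGraph_adj_side {s m t : ℕ} {x y : Fin (2 * (s + 1))}
    (h : (babiGraph s m t).Adj x y) : (x.val < s + 1 ↔ ¬ y.val < s + 1) := by
  rcases h with ⟨h1, h2, _⟩ | ⟨h1, h2, _⟩ <;> constructor <;> intro <;> omega

lemma babiGraph_walk_parity (s m t : ℕ) {x y : Fin (2 * (s + 1))}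
    (w : (babiGraph s m t).Walk x y) :
    Even w.length ↔ (x.val < s + 1 ↔ y.val < s + 1) := by
  induction w with
  | nil => simp
  | cons h p ih =>
    rw [Walk.length_cons, Nat.even_add_one, ih]
    have := babiGraph_adj_side h
    tauto

lemma babiGraph_girth (s m t : ℕ) (hm2 : 2 ≤ m) (h2m : s + 1 = 2 * m) :
    (babiGraph s m t).girth = 4 := by
  set G := babiGraph s m t with hG
  have hmlt : m < s + 1 := by omega
  have hmlt1 : m + 1 < s + 1 := by omega
  have va0 : Fin (2 * (s + 1)) := ⟨0, by omega⟩
  -- vertices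
  let a0 : Fin (2 * (s + 1)) := ⟨0, by omega⟩
  let a1 : Fin (2 * (s + 1)) := ⟨1, by omega⟩
  let b0 : Fin (2 * (s + 1)) := ⟨s + 1 + m, by omega⟩
  let b1 : Fin (2 * (s + 1)) := ⟨s + 1 + m + 1, by omega⟩
  have hnH : ∀ i j, i < 2 → m ≤ j → ¬ Hrel m t i j := by
    rintro i j hi hj (⟨h1, h2⟩ | ⟨h1, h2, h3⟩) <;> omega
  have hb0v : b0.val - (s + 1) = m := by simp [b0]
  have hb1v : b1.val - (s + 1) = m + 1 := by simp [b1]; omega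
  have hadj : ∀ (a b : Fin (2 * (s + 1))), a.val < 2 → m ≤ b.val - (s + 1) →
      s + 1 ≤ b.val → G.Adj a b := by
    intro a b ha hb hb'
    exact Or.inl ⟨by omega, hb', hnH _ _ ha hb⟩
  have h1 : G.Adj a0 b0 := hadj a0 b0 (by simp [a0]) (by rw [hb0v]) (by simp [b0])
  have h2 : G.Adj a1 b0 := hadj a1 b0 (by simp [a1]) (by rw [hb0v]) (by simp [b0])
  have h3 : G.Adj a1 b1 := hadj a1 b1 (by simp [a1]) (by rw [hb1v]; omega) (by simp [b1]; omega)
  have h4 : G.Adj a0 b1 := hadj a0 b1 (by simp [a0]) (by rw [hb1v]; omega) (by simp [b1]; omega)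
  let w : G.Walk a0 a0 :=
    Walk.cons h1 (Walk.cons h2.symm (Walk.cons h3 (Walk.cons h4.symm Walk.nil)))
  have hvals : a0.val = 0 ∧ a1.val = 1 ∧ b0.val = s + 1 + m ∧ b1.val = s + 1 + m + 1 :=
    ⟨rfl, rfl, rfl, rfl⟩
  have hne : b0 ≠ a1 ∧ b0 ≠ b1 ∧ b0 ≠ a0 ∧ a1 ≠ b1 ∧ a1 ≠ a0 ∧ b1 ≠ a0 := by
    refine ⟨?_, ?_, ?_, ?_, ?_, ?_⟩ <;>
      (intro h; have h2 := congrArg Fin.val h; simp only [a0, a1, b0, b1] at h2; omega)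
  have hcyc : w.IsCycle := by
    rw [Walk.cons_isCycle_iff]
    constructor
    · rw [Walk.cons_isPath_iff, Walk.cons_isPath_iff, Walk.cons_isPath_iff]
      refine ⟨⟨⟨Walk.IsPath.nil, by simp [hne.2.2.2.2.2]⟩, ?_⟩, ?_⟩
      · simp only [Walk.support_cons, Walk.support_nil, List.mem_cons, List.not_mem_nil]
        push_neg
        exact ⟨hne.2.2.2.1, hne.2.2.2.2.1, trivial⟩
      · simp only [Walk.support_cons, Walk.support_nil, List.mem_cons, List.not_mem_nil]
        push_neg
        exact ⟨hne.1, hne.2.1, hne.2.2.1, trivial⟩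
    · simp only [Walk.edges_cons, Walk.edges_nil, List.mem_cons, List.not_mem_nil, or_false]
      intro h
      rcases h with h | h | h <;>
        (rw [Sym2.eq_iff] at h; simp only [a0, a1, b0, b1, Fin.mk.injEq] at h; omega)
  have hlen : w.length = 4 := rfl
  have hle4 : G.egirth ≤ ((4 : ℕ) : ℕ∞) := by
    have h' : G.egirth ≤ (w.length : ℕ∞) := by
      simp only [SimpleGraph.egirth]
      exact iInf_le_of_le a0 (iInf_le_of_le w (iInf_le _ hcyc))
    rwa [hlen] at h'
  have hge : ((4 : ℕ) : ℕ∞) ≤ G.egirth := by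
    rw [le_egirth]
    intro a wc hwc
    have he : Even wc.length := (babiGraph_walk_parity s m t wc).mpr Iff.rfl
    have h3 := hwc.three_le_length
    have h4 : 4 ≤ wc.length := by obtain ⟨k, hk⟩ := he; omega
    exact_mod_cast h4
  have heg : G.egirth = ((4 : ℕ) : ℕ∞) := le_antisymm hle4 hge
  rw [SimpleGraph.girth, heg, ENat.toNat_coe]

lemma ncard_setOf' {V : Type*} [Fintype V] (p : V → Prop) [DecidablePred p] :
    {v | p v}.ncard = (Finset.univ.filter p).card := by
  rw [Set.ncard_eq_toFinset_card', Set.toFinset_setOf]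

lemma card_filter_fin (n : ℕ) (p : ℕ → Prop) [DecidablePred p] :
    ((Finset.univ : Finset (Fin n)).filter (fun x => p x.val)).card
      = ((Finset.range n).filter p).card := by
  apply Finset.card_bij (fun x _ => x.val)
  · intro a ha
    simp only [Finset.mem_filter, Finset.mem_univ, true_and, Finset.mem_range] at *
    exact ⟨a.isLt, ha⟩
  · intro a _ b _ h
    exact Fin.ext h
  · intro b hb
    simp only [Finset.mem_filter, Finset.mem_range] at hb
    exact ⟨⟨b, hb.1⟩, by simp [hb.2], rfl⟩

lemma babiGraph_isBabi (r s m t : ℕ) (hr : 2 ≤ r) (hrs : r < s) (h2r : s < 2 * r)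
    (h2m : s + 1 = 2 * m) (htr : t = s + 1 - r) :
    IsBabi r s 4 (babiGraph s m t) := by
  have hm : 0 < m := by omega
  have hm2 : 2 ≤ m := by omega
  have htm : t ≤ m := by omega
  set G := babiGraph s m t with hG
  have hdeg : ∀ x : Fin (2 * (s + 1)), deg G x =
      if (x.val < m ∨ (s + 1 ≤ x.val ∧ x.val < s + 1 + m)) then s else r := by
    intro x
    have := babiGraph_deg s m t hm h2m htm x
    rwa [show s + 1 - t = r by omega] at this
  refine ⟨babiGraph_girth s m t hm2 h2m, ?_, ?_, ?_, ?_⟩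
  · intro v
    rw [hdeg v]
    split_ifs <;> tauto
  · refine ⟨⟨m, by omega⟩, ?_⟩
    rw [hdeg]
    exact if_neg (show ¬(m < m ∨ (s + 1 ≤ m ∧ m < s + 1 + m)) by omega)
  · refine ⟨⟨0, by omega⟩, ?_⟩
    rw [hdeg]
    exact if_pos (show (0 < m ∨ (s + 1 ≤ 0 ∧ 0 < s + 1 + m)) from Or.inl hm)
  · have hset_s : {v : Fin (2 * (s + 1)) | deg G v = s}
        = {v : Fin (2 * (s + 1)) | v.val < m ∨ (s + 1 ≤ v.val ∧ v.val < s + 1 + m)} := by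
      ext v
      simp only [Set.mem_setOf_eq, hdeg v]
      split_ifs with h <;> simp [h] <;> omega
    have hset_r : {v : Fin (2 * (s + 1)) | deg G v = r}
        = {v : Fin (2 * (s + 1)) | ¬ (v.val < m ∨ (s + 1 ≤ v.val ∧ v.val < s + 1 + m))} := by
      ext v
      simp only [Set.mem_setOf_eq, hdeg v]
      split_ifs with h <;> simp [h] <;> omega
    rw [hset_s, hset_r, ncard_setOf', ncard_setOf']
    have cardP : ((Finset.univ : Finset (Fin (2 * (s + 1)))).filter
        (fun v => v.val < m ∨ (s + 1 ≤ v.val ∧ v.val < s + 1 + m))).card = s + 1 := by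
      rw [card_filter_fin (2 * (s + 1)) (fun v => v < m ∨ (s + 1 ≤ v ∧ v < s + 1 + m))]
      have : (Finset.range (2 * (s + 1))).filter
          (fun v => v < m ∨ (s + 1 ≤ v ∧ v < s + 1 + m))
          = Finset.range m ∪ Finset.Ico (s + 1) (s + 1 + m) := by
        ext v
        simp only [Finset.mem_filter, Finset.mem_range, Finset.mem_union, Finset.mem_Ico]
        omega
      rw [this, Finset.card_union_of_disjoint, Finset.card_range, Nat.card_Ico]
      · omega
      · rw [Finset.disjoint_left]
        intro v hv hv'
        simp only [Finset.mem_range, Finset.mem_Ico] at *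
        omega
    have hsplit := Finset.card_filter_add_card_filter_not
      (s := (Finset.univ : Finset (Fin (2 * (s + 1)))))
      (p := fun v => v.val < m ∨ (s + 1 ≤ v.val ∧ v.val < s + 1 + m))
    rw [Finset.card_univ, Fintype.card_fin, cardP] at hsplit
    rw [cardP]
    omega

end aux

/-- when `2r > s` and `s` is odd, there is no `(r,s;4)`-babi-graph
of order `2s`, and `n_bb(r,s;4) = 2(s+1)`. -/
theorem stmt_14 (r s : ℕ) (hr : 2 ≤ r) (hrs : r < s) (h2r : s < 2 * r) (hso : Odd s) :
    (∀ G : SimpleGraph (Fin (2 * s)), ¬ IsBabi r s 4 G) ∧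
    (∃ G : SimpleGraph (Fin (2 * (s + 1))), IsBabi r s 4 G) ∧
    (∀ (n : ℕ) (G : SimpleGraph (Fin n)), IsBabi r s 4 G → 2 * (s + 1) ≤ n) := by
  obtain ⟨k, hk⟩ := hso
  refine ⟨?_, ?_, ?_⟩
  · intro G hB
    haveI : DecidableRel G.Adj := fun a b => Classical.propDecidable _
    exact babi_no2s hr hrs ⟨k, hk⟩ (Fintype.card_fin _) hB
  · exact ⟨babiGraph s (k + 1) (s + 1 - r),
      babiGraph_isBabi r s (k + 1) (s + 1 - r) hr hrs h2r (by omega) rfl⟩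
  · intro n G hB
    haveI : DecidableRel G.Adj := fun a b => Classical.propDecidable _
    have hlb := babi_lb hrs hB
    have hcards := babi_card hrs hB
    rw [Fintype.card_fin] at hlb hcards
    have hne : n ≠ 2 * s := by
      intro h
      exact babi_no2s hr hrs ⟨k, hk⟩ (by rw [Fintype.card_fin, h]) hB
    omega
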